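/- arXiv:2512.24567 — 3 statements merged into one kernel-verified Lean document; each statement's English description precedes it below -/
import Mathlib

section
/- Let μ and ν be Borel probability measures on ℝ with finite second moments, with cumulative distribution functions F_μ and F_ν and quantile (inverse CDF) functions F_μ⁻¹, F_ν⁻¹. Then the squared 2-Wasserstein distance satisfies W₂²(μ,ν) = ∫₀¹ |F_μ⁻¹(p) − F_ν⁻¹(p)|² dp. -/
open MeasureTheory Set Filter
open scoped ENNReal Topology

/-- The CDF of a measure on ℝ. -/
noncomputable def mcdf (μ : Measure ℝ) (x : ℝ) : ℝ := (μ (Iic x)).toReal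

/-- The quantile (inverse CDF) function of a measure on ℝ. -/
noncomputable def quantile (μ : Measure ℝ) (p : ℝ) : ℝ := sInf {x : ℝ | p ≤ mcdf μ x}

section quantile
variable (μ : Measure ℝ) [IsProbabilityMeasure μ]

lemma mcdf_nonneg (x : ℝ) : 0 ≤ mcdf μ x := ENNReal.toReal_nonneg

lemma mcdf_le_one (x : ℝ) : mcdf μ x ≤ 1 := by
  rw [mcdf, show (1:ℝ) = (μ univ).toReal by simp]
  exact ENNReal.toReal_mono (measure_ne_top _ _) (measure_mono (subset_univ _))

lemma mcdf_mono : Monotone (mcdf μ) := fun a b hab =>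
  ENNReal.toReal_mono (measure_ne_top _ _) (measure_mono (Iic_subset_Iic.2 hab))

lemma ofReal_mcdf (x : ℝ) : ENNReal.ofReal (mcdf μ x) = μ (Iic x) :=
  ENNReal.ofReal_toReal (measure_ne_top _ _)

lemma exists_mcdf_ge {p : ℝ} (hp : p < 1) : ∃ x, p ≤ mcdf μ x := by
  rcases le_or_gt p 0 with h | h
  · exact ⟨0, h.trans (mcdf_nonneg μ 0)⟩
  have h1 : ENNReal.ofReal p < 1 := by
    rw [show (1:ℝ≥0∞) = ENNReal.ofReal 1 by simp]
    exact ENNReal.ofReal_lt_ofReal_iff_of_nonneg h.le |>.2 hp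
  have h2 : Tendsto (fun x => μ (Iic x)) atTop (𝓝 (μ univ)) := tendsto_measure_Iic_atTop μ
  rw [measure_univ] at h2
  have := (h2.eventually (eventually_gt_nhds h1)).exists
  obtain ⟨x, hx⟩ := this
  refine ⟨x, ?_⟩
  have := ENNReal.toReal_mono (measure_ne_top μ _) hx.le
  rwa [ENNReal.toReal_ofReal h.le] at this

lemma tendsto_mcdf_atBot : Tendsto (fun n : ℕ => μ (Iic (-(n:ℝ)))) atTop (𝓝 0) := by
  have h := tendsto_measure_iInter_atTop (μ := μ) (s := fun n : ℕ => Iic (-(n:ℝ)))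
    (fun n => measurableSet_Iic.nullMeasurableSet)
    (fun a b hab => Iic_subset_Iic.2 (by simpa using hab))
    ⟨0, measure_ne_top _ _⟩
  have he : ⋂ n : ℕ, Iic (-(n:ℝ)) = ∅ := by
    ext y
    simp only [mem_iInter, mem_Iic, mem_empty_iff_false, iff_false, not_forall, not_le]
    obtain ⟨n, hn⟩ := exists_nat_gt (-y)
    exact ⟨n, by linarith⟩
  rw [he] at h
  simpa [Function.comp_def] using h

lemma bddBelow_quantileSet {p : ℝ} (hp : 0 < p) : BddBelow {x : ℝ | p ≤ mcdf μ x} := by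
  have h1 : (0:ℝ≥0∞) < ENNReal.ofReal p := ENNReal.ofReal_pos.2 hp
  obtain ⟨n, hn⟩ := ((tendsto_mcdf_atBot μ).eventually (eventually_lt_nhds h1)).exists
  refine ⟨-(n:ℝ), fun y hy => ?_⟩
  by_contra hc
  push_neg at hc
  have h2 : mcdf μ (-(n:ℝ)) < p := by
    have := ENNReal.toReal_strict_mono (by simp) hn
    rwa [ENNReal.toReal_ofReal hp.le] at this
  exact absurd (hy.trans (mcdf_mono μ hc.le)) (not_le.2 h2)

lemma quantileSet_nonempty {p : ℝ} (hp : p < 1) : {x : ℝ | p ≤ mcdf μ x}.Nonempty :=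
  exists_mcdf_ge μ hp

lemma tendsto_mcdf_right (x : ℝ) :
    Tendsto (fun n : ℕ => mcdf μ (x + 1 / (n + 1))) atTop (𝓝 (mcdf μ x)) := by
  have h := tendsto_measure_iInter_atTop (μ := μ) (s := fun n : ℕ => Iic (x + 1 / (n + 1)))
    (fun n => measurableSet_Iic.nullMeasurableSet)
    (fun a b hab => Iic_subset_Iic.2 (by
      have : (a:ℝ) ≤ b := Nat.cast_le.2 hab
      linarith [one_div_le_one_div_of_le (by positivity : (0:ℝ) < a + 1) (by linarith : (a:ℝ) + 1 ≤ b + 1)]))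
    ⟨0, measure_ne_top _ _⟩
  have he : ⋂ n : ℕ, Iic (x + 1 / ((n:ℝ) + 1)) = Iic x := by
    ext y
    simp only [mem_iInter, mem_Iic]
    constructor
    · intro hy
      have ht : Tendsto (fun n : ℕ => x + 1 / ((n:ℝ) + 1)) atTop (𝓝 x) := by
        have := tendsto_one_div_add_atTop_nhds_zero_nat (𝕜 := ℝ)
        simpa using tendsto_const_nhds.add this
      exact ge_of_tendsto' ht hy
    · intro hy n
      have : (0:ℝ) < 1 / ((n:ℝ) + 1) := by positivity
      linarith
  rw [he] at h
  exact ((ENNReal.tendsto_toReal (measure_ne_top _ _)).comp h)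

lemma quantile_le_iff {p x : ℝ} (hp0 : 0 < p) (hp1 : p < 1) :
    quantile μ p ≤ x ↔ p ≤ mcdf μ x := by
  constructor
  · intro h
    have key : ∀ n : ℕ, p ≤ mcdf μ (x + 1 / (n + 1)) := by
      intro n
      have hlt : sInf {x : ℝ | p ≤ mcdf μ x} < x + 1 / (n + 1) :=
        lt_of_le_of_lt h (lt_add_of_pos_right x (by positivity))
      obtain ⟨s, hs, hsx⟩ := exists_lt_of_csInf_lt (quantileSet_nonempty μ hp1) hlt
      exact hs.trans (mcdf_mono μ hsx.le)
    exact ge_of_tendsto' (tendsto_mcdf_right μ x) key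
  · intro h
    exact csInf_le (bddBelow_quantileSet μ hp0) h

end quantile
section pushforward
variable (μ : Measure ℝ) [IsProbabilityMeasure μ]

/-- measurable modification of the quantile function -/
noncomputable def qt (μ : Measure ℝ) (p : ℝ) : ℝ :=
  if 0 < p ∧ p < 1 then quantile μ p else 0

lemma qt_eq_quantile {p : ℝ} (hp : p ∈ Ioo (0:ℝ) 1) : qt μ p = quantile μ p := by
  simp [qt, hp.1, hp.2]

lemma qt_preimage_Iic (x : ℝ) :
    qt μ ⁻¹' Iic x =
      (Ioo 0 1 ∩ Iic (mcdf μ x)) ∪ ((Ioo (0:ℝ) 1)ᶜ ∩ {p : ℝ | (0:ℝ) ≤ x}) := by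
  ext p
  by_cases hp : 0 < p ∧ p < 1
  · simp only [mem_preimage, mem_Iic, qt, if_pos hp, mem_union, mem_inter_iff, mem_Ioo,
      mem_compl_iff, mem_setOf_eq]
    rw [quantile_le_iff μ hp.1 hp.2]
    tauto
  · simp only [mem_preimage, mem_Iic, qt, if_neg hp, mem_union, mem_inter_iff, mem_Ioo,
      mem_compl_iff, mem_setOf_eq]
    tauto

lemma measurable_qt : Measurable (qt μ) := by
  apply measurable_of_Iic
  intro x
  rw [qt_preimage_Iic]
  apply (measurableSet_Ioo.inter measurableSet_Iic).union
  apply measurableSet_Ioo.compl.inter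
  by_cases h : (0:ℝ) ≤ x
  · rw [show {p : ℝ | (0:ℝ) ≤ x} = univ from eq_univ_of_forall fun _ => h]
    exact MeasurableSet.univ
  · rw [show {p : ℝ | (0:ℝ) ≤ x} = ∅ from eq_empty_of_forall_notMem fun _ => h]
    exact MeasurableSet.empty

lemma vol_Ioo_inter_Iic {m : ℝ} (h0 : 0 ≤ m) (h1 : m ≤ 1) :
    volume (Ioo (0:ℝ) 1 ∩ Iic m) = ENNReal.ofReal m := by
  rcases eq_or_lt_of_le h1 with rfl | hlt
  · rw [show Ioo (0:ℝ) 1 ∩ Iic 1 = Ioo 0 1 from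
      inter_eq_self_of_subset_left fun p hp => le_of_lt hp.2]
    simp [Real.volume_Ioo]
  · rw [show Ioo (0:ℝ) 1 ∩ Iic m = Ioc 0 m by
      ext p
      simp only [mem_inter_iff, mem_Ioo, mem_Iic, mem_Ioc]
      constructor
      · rintro ⟨⟨h1, _⟩, h3⟩; exact ⟨h1, h3⟩
      · rintro ⟨h1, h2⟩; exact ⟨⟨h1, lt_of_le_of_lt h2 hlt⟩, h2⟩]
    rw [Real.volume_Ioc]
    norm_num

instance : IsProbabilityMeasure (volume.restrict (Ioo (0:ℝ) 1)) :=
  ⟨by simp [Real.volume_Ioo]⟩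

lemma map_qt : (volume.restrict (Ioo (0:ℝ) 1)).map (qt μ) = μ := by
  haveI : IsProbabilityMeasure ((volume.restrict (Ioo (0:ℝ) 1)).map (qt μ)) :=
    Measure.isProbabilityMeasure_map (measurable_qt μ).aemeasurable
  apply Measure.ext_of_Iic
  intro x
  rw [Measure.map_apply (measurable_qt μ) measurableSet_Iic,
    Measure.restrict_apply (measurable_qt μ measurableSet_Iic)]
  have hset : qt μ ⁻¹' Iic x ∩ Ioo 0 1 = Ioo (0:ℝ) 1 ∩ Iic (mcdf μ x) := by
    rw [qt_preimage_Iic]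
    ext p
    simp only [mem_union, mem_inter_iff, mem_compl_iff, mem_Ioo, mem_Iic, mem_setOf_eq]
    tauto
  rw [hset, vol_Ioo_inter_Iic (mcdf_nonneg μ x) (mcdf_le_one μ x), ofReal_mcdf]

end pushforward
section gmachinery

/-- elementary layer function -/
noncomputable def hfun (z : ℝ × ℝ) (s : ℝ) : ℝ :=
  (if z.1 ≤ s then (1:ℝ) else 0) - (if z.2 ≤ s then (1:ℝ) else 0)

/-- the product layer function -/
noncomputable def gfun (z w : ℝ × ℝ) : ℝ := hfun z w.1 * hfun z w.2

lemma hfun_eq_of_le {z : ℝ × ℝ} (h : z.1 ≤ z.2) :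
    hfun z = (Ico z.1 z.2).indicator (fun _ => (1:ℝ)) := by
  funext s
  by_cases h1 : z.1 ≤ s <;> by_cases h2 : z.2 ≤ s
  · simp [hfun, h1, h2, indicator_apply, mem_Ico, not_lt.2 h2]
  · simp [hfun, h1, h2, indicator_apply, mem_Ico, not_le.1 h2]
  · exact absurd (h.trans h2) h1
  · simp [hfun, h1, h2, indicator_apply, mem_Ico]

lemma hfun_eq_of_ge {z : ℝ × ℝ} (h : z.2 ≤ z.1) :
    hfun z = fun s => -((Ico z.2 z.1).indicator (fun _ => (1:ℝ)) s) := by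
  funext s
  have := congrFun (hfun_eq_of_le (z := (z.2, z.1)) h) s
  simp only [hfun] at this ⊢
  linarith [this]

lemma integrable_hfun (z : ℝ × ℝ) : Integrable (hfun z) volume := by
  rcases le_total z.1 z.2 with h | h
  · rw [hfun_eq_of_le h]
    exact (integrableOn_const measure_Ico_lt_top.ne (by simp)).integrable_indicator measurableSet_Ico
  · rw [hfun_eq_of_ge h]
    exact ((integrableOn_const measure_Ico_lt_top.ne (by simp)).integrable_indicator
      measurableSet_Ico).neg

lemma integral_hfun (z : ℝ × ℝ) : ∫ s, hfun z s = z.2 - z.1 := by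
  rcases le_total z.1 z.2 with h | h
  · rw [hfun_eq_of_le h, integral_indicator measurableSet_Ico]
    simp [Real.volume_Ico, ENNReal.toReal_ofReal (sub_nonneg.2 h), h]
  · rw [hfun_eq_of_ge h]
    rw [integral_neg, integral_indicator measurableSet_Ico]
    simp only [integral_const, smul_eq_mul, mul_one, Measure.restrict_apply_univ]
    rw [measureReal_def, Measure.restrict_apply_univ, Real.volume_Ico, ENNReal.toReal_ofReal (sub_nonneg.2 h)]
    ring

lemma hfun_nonneg_of_le {z : ℝ × ℝ} (h : z.1 ≤ z.2) (s : ℝ) : 0 ≤ hfun z s := by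
  rw [hfun_eq_of_le h]
  exact indicator_nonneg (fun _ _ => zero_le_one) s

lemma hfun_nonpos_of_ge {z : ℝ × ℝ} (h : z.2 ≤ z.1) (s : ℝ) : hfun z s ≤ 0 := by
  rw [hfun_eq_of_ge h]
  exact neg_nonpos.2 (indicator_nonneg (fun _ _ => zero_le_one) s)

lemma gfun_nonneg (z w : ℝ × ℝ) : 0 ≤ gfun z w := by
  rcases le_total z.1 z.2 with h | h
  · exact mul_nonneg (hfun_nonneg_of_le h _) (hfun_nonneg_of_le h _)
  · rw [gfun]
    nlinarith [hfun_nonpos_of_ge h w.1, hfun_nonpos_of_ge h w.2]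

lemma integrable_gfun_right (z : ℝ × ℝ) :
    Integrable (fun w : ℝ × ℝ => gfun z w) (volume.prod volume) :=
  (integrable_hfun z).mul_prod (integrable_hfun z)

lemma integral_gfun_right (z : ℝ × ℝ) :
    ∫ w, gfun z w ∂(volume.prod (volume : Measure ℝ)) = (z.1 - z.2) ^ 2 := by
  rw [show (fun w : ℝ × ℝ => gfun z w) = fun w : ℝ × ℝ => hfun z w.1 * hfun z w.2 from rfl,
    integral_prod_mul, integral_hfun]
  ring

lemma measurable_gfun :
    Measurable (fun q : (ℝ × ℝ) × (ℝ × ℝ) => gfun q.1 q.2) := by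
  apply Measurable.mul <;> apply Measurable.sub <;>
    refine Measurable.ite ?_ measurable_const measurable_const
  · exact measurableSet_le measurable_fst.fst measurable_snd.fst
  · exact measurableSet_le measurable_fst.snd measurable_snd.fst
  · exact measurableSet_le measurable_fst.fst measurable_snd.snd
  · exact measurableSet_le measurable_fst.snd measurable_snd.snd

lemma ite_expand (a b c d : Prop) [Decidable a] [Decidable b] [Decidable c] [Decidable d] :
    ((if a then (1:ℝ) else 0) - (if b then (1:ℝ) else 0)) *
      ((if c then (1:ℝ) else 0) - (if d then (1:ℝ) else 0)) =
    (if a ∧ c then (1:ℝ) else 0) - (if a ∧ d then (1:ℝ) else 0) -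
      (if b ∧ c then (1:ℝ) else 0) + (if b ∧ d then (1:ℝ) else 0) := by
  by_cases ha : a <;> by_cases hb : b <;> by_cases hc : c <;> by_cases hd : d <;>
    simp [ha, hb, hc, hd] <;> ring

/-- the "CDF kernel" of a coupling -/
noncomputable def Kfn (γ : Measure (ℝ × ℝ)) (w : ℝ × ℝ) : ℝ :=
  (γ {z : ℝ × ℝ | z.1 ≤ w.1 ∧ z.1 ≤ w.2}).toReal - (γ {z : ℝ × ℝ | z.1 ≤ w.1 ∧ z.2 ≤ w.2}).toReal
  - (γ {z : ℝ × ℝ | z.2 ≤ w.1 ∧ z.1 ≤ w.2}).toReal + (γ {z : ℝ × ℝ | z.2 ≤ w.1 ∧ z.2 ≤ w.2}).toReal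

lemma measurableSet_cross (f g : ℝ × ℝ → ℝ) (hf : Measurable f) (hg : Measurable g) (s t : ℝ) :
    MeasurableSet {z : ℝ × ℝ | f z ≤ s ∧ g z ≤ t} := by
  rw [show {z : ℝ × ℝ | f z ≤ s ∧ g z ≤ t} = {z | f z ≤ s} ∩ {z | g z ≤ t} from rfl]
  exact (measurableSet_le hf measurable_const).inter (measurableSet_le hg measurable_const)

lemma integral_gfun_left (γ : Measure (ℝ × ℝ)) [IsProbabilityMeasure γ] (w : ℝ × ℝ) :
    ∫ z, gfun z w ∂γ = Kfn γ w := by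
  have hrw : (fun z : ℝ × ℝ => gfun z w) = fun z =>
      ({z : ℝ × ℝ | z.1 ≤ w.1 ∧ z.1 ≤ w.2}).indicator (fun _ => (1:ℝ)) z
      - ({z : ℝ × ℝ | z.1 ≤ w.1 ∧ z.2 ≤ w.2}).indicator (fun _ => (1:ℝ)) z
      - ({z : ℝ × ℝ | z.2 ≤ w.1 ∧ z.1 ≤ w.2}).indicator (fun _ => (1:ℝ)) z
      + ({z : ℝ × ℝ | z.2 ≤ w.1 ∧ z.2 ≤ w.2}).indicator (fun _ => (1:ℝ)) z := by
    funext z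
    rw [gfun, hfun, hfun, ite_expand]
    simp [indicator_apply]
  have m1 := measurableSet_cross _ _ measurable_fst measurable_fst w.1 w.2
  have m2 := measurableSet_cross _ _ measurable_fst measurable_snd w.1 w.2
  have m3 := measurableSet_cross _ _ measurable_snd measurable_fst w.1 w.2
  have m4 := measurableSet_cross _ _ measurable_snd measurable_snd w.1 w.2
  have i1 := (integrable_const (1:ℝ) (μ := γ)).indicator m1
  have i2 := (integrable_const (1:ℝ) (μ := γ)).indicator m2
  have i3 := (integrable_const (1:ℝ) (μ := γ)).indicator m3
  have i4 := (integrable_const (1:ℝ) (μ := γ)).indicator m4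
  have j2 : Integrable (fun z : ℝ × ℝ =>
      ({z : ℝ × ℝ | z.1 ≤ w.1 ∧ z.1 ≤ w.2}).indicator (fun _ => (1:ℝ)) z
      - ({z : ℝ × ℝ | z.1 ≤ w.1 ∧ z.2 ≤ w.2}).indicator (fun _ => (1:ℝ)) z) γ := i1.sub i2
  have j3 : Integrable (fun z : ℝ × ℝ =>
      ({z : ℝ × ℝ | z.1 ≤ w.1 ∧ z.1 ≤ w.2}).indicator (fun _ => (1:ℝ)) z
      - ({z : ℝ × ℝ | z.1 ≤ w.1 ∧ z.2 ≤ w.2}).indicator (fun _ => (1:ℝ)) z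
      - ({z : ℝ × ℝ | z.2 ≤ w.1 ∧ z.1 ≤ w.2}).indicator (fun _ => (1:ℝ)) z) γ := j2.sub i3
  rw [hrw, integral_add j3 i4, integral_sub j2 i3, integral_sub i1 i2,
    integral_indicator_const _ m1, integral_indicator_const _ m2, integral_indicator_const _ m3,
    integral_indicator_const _ m4]
  simp [Kfn, measureReal_def]

end gmachinery
section coupling
variable {μ ν : Measure ℝ} [IsProbabilityMeasure μ] [IsProbabilityMeasure ν]

lemma isProb_of_marginal {γ : Measure (ℝ × ℝ)} (hfst : γ.map Prod.fst = μ) :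
    IsProbabilityMeasure γ := by
  constructor
  have h : γ.map Prod.fst univ = 1 := by rw [hfst]; exact measure_univ
  rwa [Measure.map_apply measurable_fst MeasurableSet.univ, preimage_univ] at h

lemma integrable_cost {γ : Measure (ℝ × ℝ)} [IsProbabilityMeasure γ]
    (hfst : γ.map Prod.fst = μ) (hsnd : γ.map Prod.snd = ν)
    (hμ : Integrable (fun x : ℝ => x ^ 2) μ) (hν : Integrable (fun x : ℝ => x ^ 2) ν) :
    Integrable (fun z : ℝ × ℝ => (z.1 - z.2) ^ 2) γ := by
  have h1 : Integrable (fun z : ℝ × ℝ => z.1 ^ 2) γ := by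
    rw [← hfst] at hμ
    exact hμ.comp_measurable measurable_fst
  have h2 : Integrable (fun z : ℝ × ℝ => z.2 ^ 2) γ := by
    rw [← hsnd] at hν
    exact hν.comp_measurable measurable_snd
  apply Integrable.mono' ((h1.const_mul 2).add (h2.const_mul 2))
  · exact ((continuous_fst.sub continuous_snd).pow 2).aestronglyMeasurable
  · filter_upwards with z
    simp only [Pi.add_apply]
    rw [Real.norm_eq_abs, abs_of_nonneg (sq_nonneg _)]
    nlinarith [sq_nonneg (z.1 + z.2)]

lemma integrable_gfun_uncurry (γ : Measure (ℝ × ℝ)) [IsProbabilityMeasure γ]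
    (hcost : Integrable (fun z : ℝ × ℝ => (z.1 - z.2) ^ 2) γ) :
    Integrable (fun q : (ℝ × ℝ) × (ℝ × ℝ) => gfun q.1 q.2) (γ.prod (volume.prod volume)) := by
  refine ⟨measurable_gfun.aestronglyMeasurable, ?_⟩
  rw [hasFiniteIntegral_iff_norm]
  have heq : ∀ q : (ℝ × ℝ) × (ℝ × ℝ),
      ENNReal.ofReal ‖gfun q.1 q.2‖ = ENNReal.ofReal (gfun q.1 q.2) := fun q => by
    rw [Real.norm_eq_abs, abs_of_nonneg (gfun_nonneg _ _)]
  calc ∫⁻ q, ENNReal.ofReal ‖gfun q.1 q.2‖ ∂(γ.prod (volume.prod volume))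
      = ∫⁻ q, ENNReal.ofReal (gfun q.1 q.2) ∂(γ.prod (volume.prod volume)) :=
        lintegral_congr heq
    _ = ∫⁻ z, ∫⁻ w, ENNReal.ofReal (gfun z w) ∂(volume.prod volume) ∂γ :=
        lintegral_prod _ (measurable_gfun.ennreal_ofReal).aemeasurable
    _ = ∫⁻ z, ENNReal.ofReal ((z.1 - z.2) ^ 2) ∂γ := by
        refine lintegral_congr fun z => ?_
        rw [← ofReal_integral_eq_lintegral_ofReal (integrable_gfun_right z)
          (ae_of_all _ (gfun_nonneg z)), integral_gfun_right]
    _ < ∞ := by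
        have h := hcost.hasFiniteIntegral
        rw [hasFiniteIntegral_iff_norm] at h
        refine lt_of_le_of_lt (le_of_eq (lintegral_congr fun z => ?_)) h
        rw [Real.norm_eq_abs, abs_of_nonneg (sq_nonneg _)]

lemma cost_eq_K (γ : Measure (ℝ × ℝ)) [IsProbabilityMeasure γ]
    (hcost : Integrable (fun z : ℝ × ℝ => (z.1 - z.2) ^ 2) γ) :
    ∫ z, (z.1 - z.2) ^ 2 ∂γ = ∫ w, Kfn γ w ∂(volume.prod (volume : Measure ℝ)) := by
  have hG := integrable_gfun_uncurry γ hcost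
  calc ∫ z, (z.1 - z.2) ^ 2 ∂γ
      = ∫ z, ∫ w, gfun z w ∂(volume.prod volume) ∂γ :=
        integral_congr_ae (ae_of_all _ fun z => (integral_gfun_right z).symm)
    _ = ∫ w, ∫ z, gfun z w ∂γ ∂(volume.prod volume) := integral_integral_swap hG
    _ = ∫ w, Kfn γ w ∂(volume.prod volume) :=
        integral_congr_ae (ae_of_all _ fun w => integral_gfun_left γ w)

lemma integrable_K (γ : Measure (ℝ × ℝ)) [IsProbabilityMeasure γ]
    (hcost : Integrable (fun z : ℝ × ℝ => (z.1 - z.2) ^ 2) γ) :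
    Integrable (Kfn γ) (volume.prod (volume : Measure ℝ)) := by
  have hG := (integrable_gfun_uncurry γ hcost).swap
  have h2 := hG.integral_prod_left
  refine h2.congr (ae_of_all _ fun w => ?_)
  exact integral_gfun_left γ w

/-- the quantile coupling -/
noncomputable def Qc (μ ν : Measure ℝ) : Measure (ℝ × ℝ) :=
  (volume.restrict (Ioo (0:ℝ) 1)).map (fun p => (qt μ p, qt ν p))

lemma measurable_qtpair : Measurable (fun p => (qt μ p, qt ν p)) :=
  (measurable_qt μ).prodMk (measurable_qt ν)

lemma Qc_fst : (Qc μ ν).map Prod.fst = μ := by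
  rw [Qc, Measure.map_map measurable_fst measurable_qtpair]
  exact map_qt μ

lemma Qc_snd : (Qc μ ν).map Prod.snd = ν := by
  rw [Qc, Measure.map_map measurable_snd measurable_qtpair]
  exact map_qt ν

instance : IsProbabilityMeasure (Qc μ ν) := isProb_of_marginal (Qc_fst)

lemma Qc_cross (s t : ℝ) :
    ((Qc μ ν) {z : ℝ × ℝ | z.1 ≤ s ∧ z.2 ≤ t}).toReal = min (mcdf μ s) (mcdf ν t) := by
  rw [Qc, Measure.map_apply measurable_qtpair
    (measurableSet_cross _ _ measurable_fst measurable_snd s t),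
    Measure.restrict_apply (measurable_qtpair (measurableSet_cross _ _ measurable_fst
      measurable_snd s t))]
  have hset : (fun p => (qt μ p, qt ν p)) ⁻¹' {z : ℝ × ℝ | z.1 ≤ s ∧ z.2 ≤ t} ∩ Ioo 0 1
      = Ioo (0:ℝ) 1 ∩ Iic (min (mcdf μ s) (mcdf ν t)) := by
    ext p
    simp only [mem_inter_iff, mem_preimage, mem_setOf_eq, mem_Ioo, mem_Iic, le_min_iff]
    constructor
    · rintro ⟨⟨h1, h2⟩, hp⟩
      rw [qt_eq_quantile μ hp, quantile_le_iff μ hp.1 hp.2] at h1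
      rw [qt_eq_quantile ν hp, quantile_le_iff ν hp.1 hp.2] at h2
      exact ⟨hp, h1, h2⟩
    · rintro ⟨hp, h1, h2⟩
      rw [← quantile_le_iff μ hp.1 hp.2, ← qt_eq_quantile μ hp] at h1
      rw [← quantile_le_iff ν hp.1 hp.2, ← qt_eq_quantile ν hp] at h2
      exact ⟨⟨h1, h2⟩, hp⟩
  rw [hset, vol_Ioo_inter_Iic (le_min (mcdf_nonneg μ s) (mcdf_nonneg ν t))
    ((min_le_left _ _).trans (mcdf_le_one μ s)),
    ENNReal.toReal_ofReal (le_min (mcdf_nonneg μ s) (mcdf_nonneg ν t))]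

lemma cross_le {γ : Measure (ℝ × ℝ)} [IsProbabilityMeasure γ]
    (hfst : γ.map Prod.fst = μ) (hsnd : γ.map Prod.snd = ν) (s t : ℝ) :
    (γ {z : ℝ × ℝ | z.1 ≤ s ∧ z.2 ≤ t}).toReal ≤ min (mcdf μ s) (mcdf ν t) := by
  refine le_min ?_ ?_
  · refine ENNReal.toReal_mono (measure_ne_top _ _) ?_
    have h : γ {z : ℝ × ℝ | z.1 ≤ s ∧ z.2 ≤ t} ≤ γ (Prod.fst ⁻¹' Iic s) :=
      measure_mono fun z hz => hz.1
    rwa [← Measure.map_apply measurable_fst measurableSet_Iic, hfst] at h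
  · refine ENNReal.toReal_mono (measure_ne_top _ _) ?_
    have h : γ {z : ℝ × ℝ | z.1 ≤ s ∧ z.2 ≤ t} ≤ γ (Prod.snd ⁻¹' Iic t) :=
      measure_mono fun z hz => hz.2
    rwa [← Measure.map_apply measurable_snd measurableSet_Iic, hsnd] at h

lemma marg_fst {γ : Measure (ℝ × ℝ)} (hfst : γ.map Prod.fst = μ) (s t : ℝ) :
    γ {z : ℝ × ℝ | z.1 ≤ s ∧ z.1 ≤ t} = μ (Iic (min s t)) := by
  have h : {z : ℝ × ℝ | z.1 ≤ s ∧ z.1 ≤ t} = Prod.fst ⁻¹' Iic (min s t) := by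
    ext z; simp [le_min_iff]
  rw [h, ← Measure.map_apply measurable_fst measurableSet_Iic, hfst]

lemma marg_snd {γ : Measure (ℝ × ℝ)} (hsnd : γ.map Prod.snd = ν) (s t : ℝ) :
    γ {z : ℝ × ℝ | z.2 ≤ s ∧ z.2 ≤ t} = ν (Iic (min s t)) := by
  have h : {z : ℝ × ℝ | z.2 ≤ s ∧ z.2 ≤ t} = Prod.snd ⁻¹' Iic (min s t) := by
    ext z; simp [le_min_iff]
  rw [h, ← Measure.map_apply measurable_snd measurableSet_Iic, hsnd]

lemma Kfn_le {γ : Measure (ℝ × ℝ)} [IsProbabilityMeasure γ]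
    (hfst : γ.map Prod.fst = μ) (hsnd : γ.map Prod.snd = ν) (w : ℝ × ℝ) :
    Kfn (Qc μ ν) w ≤ Kfn γ w := by
  have e1 : γ {z : ℝ × ℝ | z.1 ≤ w.1 ∧ z.1 ≤ w.2} = (Qc μ ν) {z : ℝ × ℝ | z.1 ≤ w.1 ∧ z.1 ≤ w.2} := by
    rw [marg_fst hfst, marg_fst (Qc_fst (μ := μ) (ν := ν))]
  have e4 : γ {z : ℝ × ℝ | z.2 ≤ w.1 ∧ z.2 ≤ w.2} = (Qc μ ν) {z : ℝ × ℝ | z.2 ≤ w.1 ∧ z.2 ≤ w.2} := by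
    rw [marg_snd hsnd, marg_snd (Qc_snd (μ := μ) (ν := ν))]
  have h2 : (γ {z : ℝ × ℝ | z.1 ≤ w.1 ∧ z.2 ≤ w.2}).toReal
      ≤ ((Qc μ ν) {z : ℝ × ℝ | z.1 ≤ w.1 ∧ z.2 ≤ w.2}).toReal := by
    rw [Qc_cross]
    exact cross_le hfst hsnd w.1 w.2
  have hswap : {z : ℝ × ℝ | z.2 ≤ w.1 ∧ z.1 ≤ w.2} = {z : ℝ × ℝ | z.1 ≤ w.2 ∧ z.2 ≤ w.1} := by
    ext z; exact and_comm
  have h3 : (γ {z : ℝ × ℝ | z.2 ≤ w.1 ∧ z.1 ≤ w.2}).toReal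
      ≤ ((Qc μ ν) {z : ℝ × ℝ | z.2 ≤ w.1 ∧ z.1 ≤ w.2}).toReal := by
    rw [hswap, Qc_cross]
    exact cross_le hfst hsnd w.2 w.1
  simp only [Kfn]
  rw [e1, e4] 
  linarith

end coupling
section final
variable {μ ν : Measure ℝ} [IsProbabilityMeasure μ] [IsProbabilityMeasure ν]

lemma cost_Qc_eq :
    ∫ z, (z.1 - z.2) ^ 2 ∂(Qc μ ν) = ∫ p in Ioo (0:ℝ) 1, |quantile μ p - quantile ν p| ^ 2 := by
  rw [Qc, integral_map measurable_qtpair.aemeasurable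
    (f := fun z : ℝ × ℝ => (z.1 - z.2) ^ 2) ((continuous_fst.sub continuous_snd).pow 2).aestronglyMeasurable]
  apply setIntegral_congr_fun measurableSet_Ioo
  intro p hp
  simp only [qt_eq_quantile μ hp, qt_eq_quantile ν hp, sq_abs]

end final

/-- The squared 2-Wasserstein distance between measures on ℝ, via couplings. -/
noncomputable def W2sq (μ ν : Measure ℝ) : ℝ :=
  sInf {c : ℝ | ∃ γ : Measure (ℝ × ℝ), γ.map Prod.fst = μ ∧ γ.map Prod.snd = ν ∧
    c = ∫ p, (p.1 - p.2) ^ 2 ∂γ}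

/-- In one dimension, the squared 2-Wasserstein distance equals the L² distance between
the quantile functions. -/
theorem stmt_0 (μ ν : Measure ℝ) [IsProbabilityMeasure μ] [IsProbabilityMeasure ν]
    (hμ : Integrable (fun x : ℝ => x ^ 2) μ) (hν : Integrable (fun x : ℝ => x ^ 2) ν) :
    W2sq μ ν = ∫ p in Ioo (0 : ℝ) 1, |quantile μ p - quantile ν p| ^ 2 := by
  have hQmem : (∫ p in Ioo (0:ℝ) 1, |quantile μ p - quantile ν p| ^ 2) ∈
      {c : ℝ | ∃ γ : Measure (ℝ × ℝ), γ.map Prod.fst = μ ∧ γ.map Prod.snd = ν ∧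
        c = ∫ p, (p.1 - p.2) ^ 2 ∂γ} :=
    ⟨Qc μ ν, Qc_fst, Qc_snd, cost_Qc_eq.symm⟩
  have hlb : ∀ c ∈ {c : ℝ | ∃ γ : Measure (ℝ × ℝ), γ.map Prod.fst = μ ∧ γ.map Prod.snd = ν ∧
      c = ∫ p, (p.1 - p.2) ^ 2 ∂γ},
      (∫ p in Ioo (0:ℝ) 1, |quantile μ p - quantile ν p| ^ 2) ≤ c := by
    rintro c ⟨γ, h1, h2, rfl⟩
    haveI : IsProbabilityMeasure γ := isProb_of_marginal h1
    have hcγ : Integrable (fun z : ℝ × ℝ => (z.1 - z.2) ^ 2) γ := integrable_cost h1 h2 hμ hν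
    have hcQ : Integrable (fun z : ℝ × ℝ => (z.1 - z.2) ^ 2) (Qc μ ν) :=
      integrable_cost (γ := Qc μ ν) Qc_fst Qc_snd hμ hν
    rw [← cost_Qc_eq, cost_eq_K γ hcγ, cost_eq_K (Qc μ ν) hcQ]
    exact integral_mono (integrable_K _ hcQ) (integrable_K _ hcγ) (Kfn_le h1 h2)
  exact le_antisymm (csInf_le ⟨_, hlb⟩ hQmem) (le_csInf ⟨_, hQmem⟩ hlb)
end

section
/- Let σ and μ be probability measures on ℝ with σ atomless (e.g., having a density). If T is a nondecreasing map with T_#σ = μ, then T is an optimal transport map for the quadratic cost, i.e., W₂²(σ,μ) = ∫ |x − T(x)|² dσ(x). -/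
open MeasureTheory Set

/-! ### Auxiliary development: the convex potential and its Legendre transform -/

/-- The convex potential `φ(x) = ∫_0^x T(u) du` associated to a monotone map `T`. -/
noncomputable def otPhi (T : ℝ → ℝ) (x : ℝ) : ℝ := ∫ u in (0:ℝ)..x, T u

lemma otPhi_sub {T : ℝ → ℝ} (hT : Monotone T) (a b : ℝ) :
    otPhi T b - otPhi T a = ∫ u in a..b, T u := by
  have h := intervalIntegral.integral_add_adjacent_intervals
    (a := (0:ℝ)) (b := a) (c := b) (μ := volume)
    (hT.intervalIntegrable) (hT.intervalIntegrable)
  unfold otPhi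
  linarith [h]

lemma otPhi_two_sided {T : ℝ → ℝ} (hT : Monotone T) {a b : ℝ} (hab : a ≤ b) :
    T a * (b - a) ≤ otPhi T b - otPhi T a ∧ otPhi T b - otPhi T a ≤ T b * (b - a) := by
  rw [otPhi_sub hT]
  constructor
  · have h := intervalIntegral.integral_mono_on (μ := volume) hab
      (intervalIntegrable_const (c := T a)) hT.intervalIntegrable
      (fun u hu => hT hu.1)
    simpa [mul_comm] using h
  · have h := intervalIntegral.integral_mono_on (μ := volume) hab
      hT.intervalIntegrable (intervalIntegrable_const (c := T b))
      (fun u hu => hT hu.2)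
    simpa [mul_comm] using h

lemma otPhi_subgrad {T : ℝ → ℝ} (hT : Monotone T) (w x : ℝ) :
    otPhi T w + T w * (x - w) ≤ otPhi T x := by
  rcases le_total w x with h | h
  · have := (otPhi_two_sided hT h).1
    linarith
  · have := (otPhi_two_sided hT h).2
    nlinarith

lemma otPhi_continuous {T : ℝ → ℝ} (hT : Monotone T) : Continuous (otPhi T) := by
  rw [continuous_iff_continuousAt]
  intro a
  set C : ℝ := |T (a - 1)| + |T (a + 1)| with hC
  have hC0 : 0 ≤ C := by positivity
  have key : ∀ x y : ℝ, a - 1 ≤ x → x ≤ y → y ≤ a + 1 →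
      |otPhi T y - otPhi T x| ≤ C * (y - x) := by
    intro x y h1 h2 h3
    obtain ⟨hlo, hhi⟩ := otPhi_two_sided hT h2
    have hTx1 : T (a - 1) ≤ T x := hT h1
    have hTy1 : T y ≤ T (a + 1) := hT h3
    rw [abs_le]
    constructor
    · nlinarith [le_abs_self (T (a - 1)), neg_abs_le (T (a - 1)),
        le_abs_self (T (a + 1)), neg_abs_le (T (a + 1))]
    · nlinarith [le_abs_self (T (a - 1)), neg_abs_le (T (a - 1)),
        le_abs_self (T (a + 1)), neg_abs_le (T (a + 1))]
  have lip : LipschitzOnWith ⟨C, hC0⟩ (otPhi T) (Icc (a - 1) (a + 1)) := by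
    apply LipschitzOnWith.of_dist_le_mul
    intro x hx y hy
    rw [Real.dist_eq, Real.dist_eq]
    rcases le_total x y with h | h
    · rw [abs_sub_comm (otPhi T x), abs_sub_comm x,
        abs_of_nonneg (by linarith : (0:ℝ) ≤ y - x)]
      exact key x y hx.1 h hy.2
    · rw [abs_of_nonneg (by linarith : (0:ℝ) ≤ x - y)]
      exact key y x hy.1 h hx.2
  exact (lip.continuousOn).continuousAt (Icc_mem_nhds (by linarith) (by linarith))

lemma otPhi_abs_le {T : ℝ → ℝ} (hT : Monotone T) (x : ℝ) :
    |otPhi T x| ≤ |x| * (|T x| + |T 0|) := by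
  have h0 : otPhi T 0 = 0 := by simp [otPhi]
  rcases le_total 0 x with h | h
  · obtain ⟨hlo, hhi⟩ := otPhi_two_sided hT h
    rw [h0] at hlo hhi
    rw [abs_le, abs_of_nonneg h]
    constructor
    · nlinarith [le_abs_self (T 0), neg_abs_le (T 0), le_abs_self (T x), neg_abs_le (T x)]
    · nlinarith [le_abs_self (T 0), neg_abs_le (T 0), le_abs_self (T x), neg_abs_le (T x)]
  · obtain ⟨hlo, hhi⟩ := otPhi_two_sided hT h
    rw [h0] at hlo hhi
    rw [abs_le, abs_of_nonpos h]
    constructor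
    · nlinarith [le_abs_self (T 0), neg_abs_le (T 0), le_abs_self (T x), neg_abs_le (T x)]
    · nlinarith [le_abs_self (T 0), neg_abs_le (T 0), le_abs_self (T x), neg_abs_le (T x)]

/-- The (EReal-valued) Legendre transform of `otPhi T`, computed over rationals. -/
noncomputable def otSup (T : ℝ → ℝ) (y : ℝ) : EReal :=
  ⨆ q : ℚ, (((q : ℝ) * y - otPhi T q : ℝ) : EReal)

/-- The real-valued Legendre transform. -/
noncomputable def otPsi (T : ℝ → ℝ) (y : ℝ) : ℝ := (otSup T y).toReal

lemma otSup_lower {T : ℝ → ℝ} (hT : Monotone T) (x y : ℝ) :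
    ((x * y - otPhi T x : ℝ) : EReal) ≤ otSup T y := by
  apply le_of_forall_lt
  intro c hc
  induction c with
  | bot =>
    refine lt_of_lt_of_le ?_ (le_iSup _ (0 : ℚ))
    exact EReal.bot_lt_coe _
  | coe c =>
    rw [EReal.coe_lt_coe_iff] at hc
    set ε : ℝ := x * y - otPhi T x - c with hε
    have hε0 : 0 < ε := by simp [hε]; linarith
    set D : ℝ := |y| + |T (x + 1)| + 1 with hD
    have hD0 : 0 < D := by positivity
    set δ : ℝ := min 1 (ε / D) with hδ
    have hδ0 : 0 < δ := lt_min one_pos (by positivity)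
    obtain ⟨q, hq1, hq2⟩ := exists_rat_btwn (lt_add_of_pos_right x hδ0)
    have hqx : x ≤ (q:ℝ) := le_of_lt hq1
    have hq1' : (q:ℝ) ≤ x + 1 :=
      le_trans (le_of_lt hq2) (by have h := min_le_left (1:ℝ) (ε / D); rw [hδ]; linarith)
    have hphi : otPhi T q - otPhi T x ≤ T (x+1) * ((q:ℝ) - x) := by
      have h2 := (otPhi_two_sided hT hqx).2
      have : T (q:ℝ) ≤ T (x+1) := hT hq1'
      nlinarith
    have hgoal : c < (q:ℝ) * y - otPhi T (q:ℝ) := by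
      have hqd : (q:ℝ) - x < δ := by linarith
      have hqd' : ((q:ℝ) - x) * D < ε := by
        calc ((q:ℝ) - x) * D < δ * D := by nlinarith
        _ ≤ (ε / D) * D := by nlinarith [min_le_right (1:ℝ) (ε / D)]
        _ = ε := by field_simp
      nlinarith [le_abs_self y, neg_abs_le y, le_abs_self (T (x+1)), neg_abs_le (T (x+1))]
    calc (c : EReal) < (((q:ℝ) * y - otPhi T (q:ℝ) : ℝ) : EReal) := by
          exact_mod_cast hgoal
      _ ≤ otSup T y := le_iSup (fun q : ℚ => (((q : ℝ) * y - otPhi T q : ℝ) : EReal)) q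
  | top => exact absurd hc (not_lt.2 le_top)

lemma otSup_map {T : ℝ → ℝ} (hT : Monotone T) (w : ℝ) :
    otSup T (T w) = ((w * T w - otPhi T w : ℝ) : EReal) := by
  apply le_antisymm
  · apply iSup_le
    intro q
    have := otPhi_subgrad hT w (q : ℝ)
    exact_mod_cast (by linarith : (q:ℝ) * T w - otPhi T q ≤ w * T w - otPhi T w)
  · exact otSup_lower hT w (T w)

lemma otPsi_map {T : ℝ → ℝ} (hT : Monotone T) (w : ℝ) :
    otPsi T (T w) = w * T w - otPhi T w := by
  rw [otPsi, otSup_map hT]; exact EReal.toReal_coe _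

/-- The set of `y` where the Legendre transform is finite. -/
def otGood (T : ℝ → ℝ) : Set ℝ := {y | otSup T y < ⊤}

lemma measurable_otSup (T : ℝ → ℝ) : Measurable (otSup T) := by
  apply Measurable.iSup
  intro q
  exact measurable_coe_real_ereal.comp ((measurable_id.const_mul _).sub_const _)

lemma measurable_otPsi (T : ℝ → ℝ) : Measurable (otPsi T) :=
  measurable_ereal_toReal.comp (measurable_otSup T)

lemma measurableSet_otGood (T : ℝ → ℝ) : MeasurableSet (otGood T) :=
  measurable_otSup T (measurableSet_Iio (a := (⊤ : EReal)))

lemma otPsi_ge {T : ℝ → ℝ} (hT : Monotone T) {y : ℝ} (hy : y ∈ otGood T) (x : ℝ) :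
    x * y - otPhi T x ≤ otPsi T y := by
  have h := otSup_lower hT x y
  have htop : otSup T y ≠ ⊤ := ne_of_lt hy
  have h2 := EReal.toReal_le_toReal h (EReal.coe_ne_bot _) htop
  rw [EReal.toReal_coe] at h2
  exact h2

lemma otGood_mem {T : ℝ → ℝ} (hT : Monotone T) (w : ℝ) : T w ∈ otGood T := by
  show otSup T (T w) < ⊤
  rw [otSup_map hT]
  exact EReal.coe_lt_top _

/-- A nondecreasing map pushing an atomless measure σ forward to μ is an optimal transport
map for the quadratic cost. -/
theorem stmt_1 (σ μ : Measure ℝ) [IsProbabilityMeasure σ] [IsProbabilityMeasure μ]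
    [NullSingletonClass σ]
    (hσ2 : Integrable (fun x : ℝ => x ^ 2) σ) (hμ2 : Integrable (fun x : ℝ => x ^ 2) μ)
    (T : ℝ → ℝ) (hT : Monotone T) (hpush : σ.map T = μ) :
    W2sq σ μ = ∫ x, |x - T x| ^ 2 ∂σ := by
  have Tm : Measurable T := hT.measurable
  have hφc : Continuous (otPhi T) := otPhi_continuous hT
  -- integrability over σ
  have hTsq : Integrable (fun x : ℝ => (T x) ^ 2) σ := by
    have h := hμ2
    rw [← hpush] at h
    have := (integrable_map_measure
      ((measurable_id.pow_const 2).aestronglyMeasurable) Tm.aemeasurable).mp h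
    exact this
  have hxTx : Integrable (fun x : ℝ => x * T x) σ := by
    apply Integrable.mono' (hσ2.add hTsq) ((measurable_id.mul Tm).aestronglyMeasurable)
    filter_upwards with x
    simp only [Pi.add_apply, id_eq, Pi.mul_apply]
    rw [Real.norm_eq_abs, abs_mul]
    nlinarith [sq_abs x, sq_abs (T x), sq_nonneg (|x| - |T x|), abs_nonneg x, abs_nonneg (T x)]
  have hφint : Integrable (otPhi T) σ := by
    apply Integrable.mono' ((hσ2.add hTsq).add (integrable_const ((T 0) ^ 2 + 1)))
      hφc.aestronglyMeasurable
    filter_upwards with x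
    have h := otPhi_abs_le hT x
    simp only [Pi.add_apply]
    rw [Real.norm_eq_abs]
    nlinarith [sq_abs x, sq_abs (T x), sq_abs (T 0), sq_nonneg (|x| - |T x|),
      sq_nonneg (|x| - |T 0|), abs_nonneg x, abs_nonneg (T x), abs_nonneg (T 0)]
  have hψμ : Integrable (otPsi T) μ := by
    rw [← hpush,
      integrable_map_measure (measurable_otPsi T).aestronglyMeasurable Tm.aemeasurable]
    have hcomp : (otPsi T ∘ T) = fun w => w * T w - otPhi T w :=
      funext fun w => otPsi_map hT w
    rw [hcomp]
    exact hxTx.sub hφint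
  have hψ_int_eq : ∫ y, otPsi T y ∂μ = ∫ w, (w * T w - otPhi T w) ∂σ := by
    rw [← hpush, integral_map Tm.aemeasurable (measurable_otPsi T).aestronglyMeasurable]
    exact integral_congr_ae (Filter.Eventually.of_forall fun w => otPsi_map hT w)
  have hTsq_eq : ∫ y, y ^ 2 ∂μ = ∫ x, (T x) ^ 2 ∂σ := by
    rw [← hpush]
    exact integral_map Tm.aemeasurable ((measurable_id.pow_const 2).aestronglyMeasurable)
  have hIexp : ∫ x, (x - T x) ^ 2 ∂σ
      = ∫ x, x ^ 2 ∂σ + ∫ y, y ^ 2 ∂μ - 2 * ∫ x, x * T x ∂σ := by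
    rw [hTsq_eq]
    have hfun : (fun x : ℝ => (x - T x) ^ 2)
        = fun x => x ^ 2 + (T x) ^ 2 - 2 * (x * T x) := by
      funext x; ring
    have h1 : Integrable (fun x : ℝ => x ^ 2 + (T x) ^ 2) σ := hσ2.add hTsq
    have h2 : Integrable (fun x : ℝ => 2 * (x * T x)) σ := hxTx.const_mul 2
    have e1 : ∫ x, (x ^ 2 + (T x) ^ 2 - 2 * (x * T x)) ∂σ
        = ∫ x, (x ^ 2 + (T x) ^ 2) ∂σ - ∫ x, 2 * (x * T x) ∂σ := integral_sub h1 h2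
    have e2 : ∫ x, (x ^ 2 + (T x) ^ 2) ∂σ = ∫ x, x ^ 2 ∂σ + ∫ x, (T x) ^ 2 ∂σ :=
      integral_add hσ2 hTsq
    have e3 : ∫ x, 2 * (x * T x) ∂σ = 2 * ∫ x, x * T x ∂σ := integral_const_mul 2 _
    rw [hfun, e1, e2, e3]
  -- the value of the graph coupling
  have habs : ∫ x, |x - T x| ^ 2 ∂σ = ∫ x, (x - T x) ^ 2 ∂σ := by
    simp only [sq_abs]
  rw [habs, W2sq]
  set S : Set ℝ := {c : ℝ | ∃ γ : Measure (ℝ × ℝ), γ.map Prod.fst = σ ∧ γ.map Prod.snd = μ ∧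
    c = ∫ p, (p.1 - p.2) ^ 2 ∂γ} with hS
  have pairm : Measurable (fun x : ℝ => (x, T x)) := measurable_id.prodMk Tm
  have hmem : (∫ x, (x - T x) ^ 2 ∂σ) ∈ S := by
    refine ⟨σ.map (fun x => (x, T x)), ?_, ?_, ?_⟩
    · rw [Measure.map_map measurable_fst pairm]
      have : (Prod.fst ∘ fun x : ℝ => (x, T x)) = id := rfl
      rw [this, Measure.map_id]
    · rw [Measure.map_map measurable_snd pairm]
      have : (Prod.snd ∘ fun x : ℝ => (x, T x)) = T := rfl
      rw [this, hpush]
    · rw [integral_map (f := fun p : ℝ × ℝ => (p.1 - p.2) ^ 2) pairm.aemeasurable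
        (((measurable_fst.sub measurable_snd).pow_const 2).aestronglyMeasurable)]
  have hlb : ∀ c ∈ S, (∫ x, (x - T x) ^ 2 ∂σ) ≤ c := by
    rintro c ⟨γ, hfst, hsnd, hc⟩
    haveI : IsProbabilityMeasure γ := by
      constructor
      have h1 : (γ.map Prod.fst) univ = 1 := by rw [hfst]; exact measure_univ
      rwa [Measure.map_apply measurable_fst MeasurableSet.univ, preimage_univ] at h1
    have gx : Integrable (fun p : ℝ × ℝ => p.1 ^ 2) γ := by
      have h := hσ2
      rw [← hfst] at h
      exact (integrable_map_measure ((measurable_id.pow_const 2).aestronglyMeasurable)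
        measurable_fst.aemeasurable).mp h
    have gy : Integrable (fun p : ℝ × ℝ => p.2 ^ 2) γ := by
      have h := hμ2
      rw [← hsnd] at h
      exact (integrable_map_measure ((measurable_id.pow_const 2).aestronglyMeasurable)
        measurable_snd.aemeasurable).mp h
    have gxy : Integrable (fun p : ℝ × ℝ => p.1 * p.2) γ := by
      apply Integrable.mono' (gx.add gy) ((measurable_fst.mul measurable_snd).aestronglyMeasurable)
      filter_upwards with p
      simp only [Pi.add_apply, Pi.mul_apply]
      rw [Real.norm_eq_abs, abs_mul]
      nlinarith [sq_abs p.1, sq_abs p.2, sq_nonneg (|p.1| - |p.2|),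
        abs_nonneg p.1, abs_nonneg p.2]
    have gsq : Integrable (fun p : ℝ × ℝ => (p.1 - p.2) ^ 2) γ := by
      apply Integrable.mono' ((gx.add gy).const_mul 2)
        (((measurable_fst.sub measurable_snd).pow_const 2).aestronglyMeasurable)
      filter_upwards with p
      simp only [Pi.add_apply, Pi.sub_apply]
      rw [Real.norm_eq_abs, abs_of_nonneg (sq_nonneg _)]
      nlinarith [sq_nonneg (p.1 + p.2)]
    have gφ : Integrable (fun p : ℝ × ℝ => otPhi T p.1) γ := by
      have h := hφint
      rw [← hfst] at h
      exact (integrable_map_measure hφc.measurable.aestronglyMeasurable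
        measurable_fst.aemeasurable).mp h
    have gψ : Integrable (fun p : ℝ × ℝ => otPsi T p.2) γ := by
      have h := hψμ
      rw [← hsnd] at h
      exact (integrable_map_measure (measurable_otPsi T).aestronglyMeasurable
        measurable_snd.aemeasurable).mp h
    have hae : ∀ᵐ p ∂γ, p.1 * p.2 ≤ otPhi T p.1 + otPsi T p.2 := by
      have hG : ∀ᵐ p ∂γ, p.2 ∈ otGood T := by
        rw [ae_iff]
        have hset : {p : ℝ × ℝ | ¬ p.2 ∈ otGood T} = Prod.snd ⁻¹' (otGood T)ᶜ := rfl
        rw [hset, ← Measure.map_apply measurable_snd (measurableSet_otGood T).compl, hsnd,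
          ← hpush, Measure.map_apply Tm (measurableSet_otGood T).compl]
        have hempty : T ⁻¹' (otGood T)ᶜ = ∅ := by
          ext w
          simp only [mem_preimage, mem_compl_iff, mem_empty_iff_false, iff_false, not_not]
          exact otGood_mem hT w
        rw [hempty]
        simp
      filter_upwards [hG] with p hp
      have := otPsi_ge hT hp p.1
      linarith
    have hxy_le : ∫ p, p.1 * p.2 ∂γ ≤ ∫ x, x * T x ∂σ := by
      have e1 : ∫ p, otPhi T p.1 ∂γ = ∫ x, otPhi T x ∂σ := by
        rw [← hfst, integral_map measurable_fst.aemeasurable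
          hφc.measurable.aestronglyMeasurable]
      have e2 : ∫ p, otPsi T p.2 ∂γ = ∫ y, otPsi T y ∂μ := by
        rw [← hsnd, integral_map measurable_snd.aemeasurable
          (measurable_otPsi T).aestronglyMeasurable]
      calc ∫ p, p.1 * p.2 ∂γ ≤ ∫ p, (otPhi T p.1 + otPsi T p.2) ∂γ :=
            integral_mono_ae gxy (gφ.add gψ) hae
        _ = ∫ p, otPhi T p.1 ∂γ + ∫ p, otPsi T p.2 ∂γ := integral_add gφ gψ
        _ = ∫ x, otPhi T x ∂σ + ∫ y, otPsi T y ∂μ := by rw [e1, e2]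
        _ = ∫ x, otPhi T x ∂σ + ∫ w, (w * T w - otPhi T w) ∂σ := by rw [hψ_int_eq]
        _ = ∫ x, otPhi T x ∂σ + (∫ w, w * T w ∂σ - ∫ w, otPhi T w ∂σ) := by
            rw [integral_sub hxTx hφint]
        _ = ∫ x, x * T x ∂σ := by ring
    have hcexp : c = ∫ x, x ^ 2 ∂σ + ∫ y, y ^ 2 ∂μ - 2 * ∫ p, p.1 * p.2 ∂γ := by
      rw [hc]
      have hfun : (fun p : ℝ × ℝ => (p.1 - p.2) ^ 2)
          = fun p => p.1 ^ 2 + p.2 ^ 2 - 2 * (p.1 * p.2) := by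
        funext p; ring
      have e1 : ∫ p, p.1 ^ 2 ∂γ = ∫ x, x ^ 2 ∂σ := by
        rw [← hfst]
        exact (integral_map measurable_fst.aemeasurable
          ((measurable_id.pow_const 2).aestronglyMeasurable)).symm
      have e2 : ∫ p, p.2 ^ 2 ∂γ = ∫ y, y ^ 2 ∂μ := by
        rw [← hsnd]
        exact (integral_map measurable_snd.aemeasurable
          ((measurable_id.pow_const 2).aestronglyMeasurable)).symm
      have h1 : Integrable (fun p : ℝ × ℝ => p.1 ^ 2 + p.2 ^ 2) γ := gx.add gy
      have h2 : Integrable (fun p : ℝ × ℝ => 2 * (p.1 * p.2)) γ := gxy.const_mul 2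
      have e3 : ∫ p, (p.1 ^ 2 + p.2 ^ 2 - 2 * (p.1 * p.2)) ∂γ
          = ∫ p, (p.1 ^ 2 + p.2 ^ 2) ∂γ - ∫ p, 2 * (p.1 * p.2) ∂γ := integral_sub h1 h2
      have e4 : ∫ p, (p.1 ^ 2 + p.2 ^ 2) ∂γ = ∫ p, p.1 ^ 2 ∂γ + ∫ p, p.2 ^ 2 ∂γ :=
        integral_add gx gy
      have e5 : ∫ p, 2 * (p.1 * p.2) ∂γ = 2 * ∫ p, p.1 * p.2 ∂γ := integral_const_mul 2 _
      rw [hfun, e3, e4, e5, e1, e2]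
    rw [hIexp, hcexp]
    linarith
  exact le_antisymm (csInf_le ⟨_, hlb⟩ hmem) (le_csInf ⟨_, hmem⟩ hlb)
end

section
/- Let φ_h: ℝ^n → ℝ^n be continuously differentiable with Lipschitz-continuous Jacobian, let ψ(u) = u − φ_h(u), and suppose u* satisfies ψ(u*) = 0 with Dψ(u*) invertible. Consider the inexact Newton iteration u_{k+1} = u_k + s_k where ‖Dψ(u_k)s_k + ψ(u_k)‖ ≤ η‖ψ(u_k)‖ with 0 ≤ η < 1. Then there exists a neighborhood of u* such that for any initial guess u_0 in this neighborhood, the sequence u_k remains in the neighborhood and ‖ψ(u_{k+1})‖ ≤ η'‖ψ(u_k)‖ for some η' with η ≤ η' < 1; in particular ψ(u_k) → 0 and u_k → u*. -/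
open Filter Metric

set_option maxHeartbeats 1000000 in

/-- Local linear convergence of the inexact Newton (Newton–Krylov) iteration for the
timestepper residual `ψ(u) = u − φₕ(u)` with fixed forcing tolerance `η < 1`. -/
theorem stmt_18 (n : ℕ) (φh : EuclideanSpace ℝ (Fin n) → EuclideanSpace ℝ (Fin n))
    (hφ : ContDiff ℝ 1 φh) (K : NNReal)
    (hLip : LipschitzWith K fun u => fderiv ℝ φh u)
    (ustar : EuclideanSpace ℝ (Fin n)) (hroot : ustar - φh ustar = 0)
    (hinv : ∃ A : EuclideanSpace ℝ (Fin n) ≃L[ℝ] EuclideanSpace ℝ (Fin n),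
      (A : EuclideanSpace ℝ (Fin n) →L[ℝ] EuclideanSpace ℝ (Fin n))
        = fderiv ℝ (fun w => w - φh w) ustar)
    (η : ℝ) (hη0 : 0 ≤ η) (hη1 : η < 1) :
    ∃ V ∈ nhds ustar, ∃ η' : ℝ, η ≤ η' ∧ η' < 1 ∧
      ∀ u : ℕ → EuclideanSpace ℝ (Fin n), u 0 ∈ V →
        (∀ k, ‖fderiv ℝ (fun w => w - φh w) (u k) (u (k + 1) - u k)
            + (u k - φh (u k))‖ ≤ η * ‖u k - φh (u k)‖) →
        (∀ k, u k ∈ V) ∧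
        (∀ k, ‖u (k + 1) - φh (u (k + 1))‖ ≤ η' * ‖u k - φh (u k)‖) ∧
        Tendsto (fun k => u k - φh (u k)) atTop (nhds 0) ∧
        Tendsto u atTop (nhds ustar) := by
  classical
  obtain ⟨A, hA⟩ := hinv
  set ψ : EuclideanSpace ℝ (Fin n) → EuclideanSpace ℝ (Fin n) := fun w => w - φh w with hψdef
  set F : EuclideanSpace ℝ (Fin n) →
      EuclideanSpace ℝ (Fin n) →L[ℝ] EuclideanSpace ℝ (Fin n) :=
    fun z => ContinuousLinearMap.id ℝ _ - fderiv ℝ φh z with hFdef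
  have hdiff : ∀ z, HasFDerivAt ψ (F z) z := fun z =>
    (hasFDerivAt_id z).sub (hφ.differentiable one_ne_zero z).hasFDerivAt
  have hfd : ∀ z, fderiv ℝ ψ z = F z := fun z => (hdiff z).fderiv
  have hAF : (A : EuclideanSpace ℝ (Fin n) →L[ℝ] EuclideanSpace ℝ (Fin n)) = F ustar := by
    rw [hA]; exact hfd ustar
  have hFlip : LipschitzWith K F := by
    intro x y
    have h := hLip x y
    simp only [edist_dist] at h ⊢
    have : dist (F x) (F y) = dist (fderiv ℝ φh x) (fderiv ℝ φh y) := by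
      simp only [dist_eq_norm, hFdef]
      rw [show (ContinuousLinearMap.id ℝ _ - fderiv ℝ φh x) -
          (ContinuousLinearMap.id ℝ _ - fderiv ℝ φh y)
          = -(fderiv ℝ φh x - fderiv ℝ φh y) by abel, norm_neg]
    rw [this]; exact h
  -- Taylor estimate
  have taylor : ∀ x y, ‖ψ y - ψ x - F x (y - x)‖ ≤ (K : ℝ) * ‖y - x‖ * ‖y - x‖ := by
    intro x y
    have h := Convex.norm_image_sub_le_of_norm_hasFDerivWithin_le'
      (f := ψ) (f' := F) (φ := F x) (s := closedBall x ‖y - x‖) (C := (K : ℝ) * ‖y - x‖)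
      (fun z _ => (hdiff z).hasFDerivWithinAt)
      (fun z hz => by
        have h1 : dist (F z) (F x) ≤ (K : ℝ) * dist z x := hFlip.dist_le_mul z x
        rw [dist_eq_norm] at h1
        refine h1.trans ?_
        have : dist z x ≤ ‖y - x‖ := mem_closedBall.mp hz
        exact mul_le_mul_of_nonneg_left this K.coe_nonneg)
      (convex_closedBall _ _) (mem_closedBall_self (norm_nonneg _))
      (show y ∈ closedBall x ‖y - x‖ by simp [mem_closedBall, dist_eq_norm])
    linarith [h]
  -- constants
  set B : ℝ := ‖(A.symm : EuclideanSpace ℝ (Fin n) →L[ℝ] EuclideanSpace ℝ (Fin n))‖ + 1 with hBdef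
  have hBge : ‖(A.symm : EuclideanSpace ℝ (Fin n) →L[ℝ] EuclideanSpace ℝ (Fin n))‖ ≤ B :=
    le_add_of_nonneg_right one_pos.le
  have hBpos : (0:ℝ) < B := lt_of_lt_of_le one_pos (le_add_of_nonneg_left (norm_nonneg _))
  set K₁ : ℝ := (K : ℝ) + 1 with hK₁def
  have hKle : (K : ℝ) ≤ K₁ := le_add_of_nonneg_right one_pos.le
  have hK₁pos : (0:ℝ) < K₁ := lt_of_lt_of_le one_pos (le_add_of_nonneg_left K.coe_nonneg)
  set δ : ℝ := 1 / (4 * K₁ * B) with hδdef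
  have hδpos : 0 < δ := by positivity
  have hδeq : K₁ * B * δ = 1 / 4 := by
    rw [hδdef]; field_simp
  set ρ : ℝ := (1 - η) / 2 with hρdef
  have hρpos : 0 < ρ := by simp [hρdef]; linarith
  set ε : ℝ := min (ρ / (16 * K₁ * B ^ 2)) (δ / (4 * B)) with hεdef
  have hεpos : 0 < ε := lt_min (by positivity) (by positivity)
  have hε1 : 16 * K₁ * B ^ 2 * ε ≤ ρ := by
    have := min_le_left (ρ / (16 * K₁ * B ^ 2)) (δ / (4 * B))
    rw [← hεdef] at this
    calc 16 * K₁ * B ^ 2 * ε ≤ 16 * K₁ * B ^ 2 * (ρ / (16 * K₁ * B ^ 2)) := by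
          apply mul_le_mul_of_nonneg_left this (by positivity)
      _ = ρ := by field_simp
  have hε2 : 4 * B * ε ≤ δ := by
    have := min_le_right (ρ / (16 * K₁ * B ^ 2)) (δ / (4 * B))
    rw [← hεdef] at this
    calc 4 * B * ε ≤ 4 * B * (δ / (4 * B)) := by
          apply mul_le_mul_of_nonneg_left this (by positivity)
      _ = δ := by field_simp
  set η' : ℝ := η + ρ with hη'def
  have hη'lt : η' < 1 := by simp [hη'def, hρdef]; linarith
  have hη'ge : η ≤ η' := le_add_of_nonneg_right hρpos.le
  have hη'pos : 0 < η' := lt_of_lt_of_le hρpos (by simp [hη'def]; linarith)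
  clear_value B K₁ δ ρ ε η'
  -- lower bound for A
  have hAlow : ∀ v, ‖v‖ ≤ B * ‖(A : EuclideanSpace ℝ (Fin n) →L[ℝ] EuclideanSpace ℝ (Fin n)) v‖ := by
    intro v
    have h1 : ‖v‖ = ‖A.symm ((A : EuclideanSpace ℝ (Fin n) →L[ℝ] EuclideanSpace ℝ (Fin n)) v)‖ := by
      simp
    rw [h1]
    calc ‖A.symm ((A : EuclideanSpace ℝ (Fin n) →L[ℝ] EuclideanSpace ℝ (Fin n)) v)‖
        ≤ ‖(A.symm : EuclideanSpace ℝ (Fin n) →L[ℝ] EuclideanSpace ℝ (Fin n))‖ *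
            ‖(A : EuclideanSpace ℝ (Fin n) →L[ℝ] EuclideanSpace ℝ (Fin n)) v‖ :=
          (A.symm : EuclideanSpace ℝ (Fin n) →L[ℝ] EuclideanSpace ℝ (Fin n)).le_opNorm _
      _ ≤ B * ‖(A : EuclideanSpace ℝ (Fin n) →L[ℝ] EuclideanSpace ℝ (Fin n)) v‖ :=
          mul_le_mul_of_nonneg_right hBge (norm_nonneg _)
  -- local invertibility bound
  have hFlow : ∀ x, ‖x - ustar‖ ≤ δ → ∀ v, ‖v‖ ≤ 2 * B * ‖F x v‖ := by
    intro x hx v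
    have hd : ‖F ustar - F x‖ ≤ (K : ℝ) * ‖x - ustar‖ := by
      have := hFlip.dist_le_mul ustar x
      rw [dist_eq_norm, dist_eq_norm] at this
      rwa [norm_sub_rev ustar x] at this
    have h1 : ‖(A : EuclideanSpace ℝ (Fin n) →L[ℝ] EuclideanSpace ℝ (Fin n)) v - F x v‖
        ≤ K₁ * δ * ‖v‖ := by
      have : ‖(F ustar - F x) v‖ ≤ ‖F ustar - F x‖ * ‖v‖ := (F ustar - F x).le_opNorm v
      rw [ContinuousLinearMap.sub_apply] at this
      rw [hAF]
      refine this.trans ?_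
      have hKx : ‖F ustar - F x‖ ≤ K₁ * δ := by
        refine hd.trans ?_
        exact mul_le_mul hKle hx (norm_nonneg _) hK₁pos.le
      exact mul_le_mul_of_nonneg_right hKx (norm_nonneg _)
    have h2 := hAlow v
    have h3 : ‖(A : EuclideanSpace ℝ (Fin n) →L[ℝ] EuclideanSpace ℝ (Fin n)) v‖
        ≤ ‖F x v‖ + K₁ * δ * ‖v‖ := by
      calc ‖(A : EuclideanSpace ℝ (Fin n) →L[ℝ] EuclideanSpace ℝ (Fin n)) v‖
          ≤ ‖F x v‖ + ‖(A : EuclideanSpace ℝ (Fin n) →L[ℝ] EuclideanSpace ℝ (Fin n)) v - F x v‖ :=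
            by have := norm_sub_norm_le ((A : EuclideanSpace ℝ (Fin n) →L[ℝ]
                EuclideanSpace ℝ (Fin n)) v) (F x v); linarith [norm_sub_rev
                ((A : EuclideanSpace ℝ (Fin n) →L[ℝ] EuclideanSpace ℝ (Fin n)) v) (F x v)]
        _ ≤ ‖F x v‖ + K₁ * δ * ‖v‖ := by linarith
    have h4 : ‖v‖ ≤ B * ‖F x v‖ + B * (K₁ * δ) * ‖v‖ := by
      calc ‖v‖ ≤ B * (‖F x v‖ + K₁ * δ * ‖v‖) := h2.trans
            (mul_le_mul_of_nonneg_left h3 hBpos.le)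
        _ = B * ‖F x v‖ + B * (K₁ * δ) * ‖v‖ := by ring
    have h5 : B * (K₁ * δ) = 1 / 4 := by rw [← hδeq]; ring
    rw [h5] at h4
    have hpos : 0 ≤ B * ‖F x v‖ := by positivity
    linarith
  -- distance from residual
  have hdist : ∀ w, ‖w - ustar‖ ≤ 2 * δ → ‖w - ustar‖ ≤ 2 * B * ‖ψ w‖ := by
    intro w hw
    have ht := taylor ustar w
    have hψ0 : ψ ustar = 0 := hroot
    rw [hψ0, sub_zero] at ht
    have h1 := hAlow (w - ustar)
    rw [hAF] at h1
    have h2 : ‖F ustar (w - ustar)‖ ≤ ‖ψ w‖ + (K : ℝ) * ‖w - ustar‖ * ‖w - ustar‖ := by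
      have h0 : ‖F ustar (w - ustar)‖ - ‖ψ w‖ ≤ ‖ψ w - F ustar (w - ustar)‖ := by
        have h1 := norm_sub_norm_le (F ustar (w - ustar)) (ψ w)
        have h2 := norm_sub_rev (F ustar (w - ustar)) (ψ w)
        linarith
      linarith
    have h3 : ‖w - ustar‖ ≤ B * ‖ψ w‖ + B * ((K:ℝ) * ‖w - ustar‖) * ‖w - ustar‖ := by
      calc ‖w - ustar‖ ≤ B * ‖F ustar (w - ustar)‖ := h1
        _ ≤ B * (‖ψ w‖ + (K : ℝ) * ‖w - ustar‖ * ‖w - ustar‖) :=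
            mul_le_mul_of_nonneg_left h2 hBpos.le
        _ = B * ‖ψ w‖ + B * ((K:ℝ) * ‖w - ustar‖) * ‖w - ustar‖ := by ring
    have h4 : B * ((K:ℝ) * ‖w - ustar‖) ≤ 1 / 2 := by
      calc B * ((K:ℝ) * ‖w - ustar‖) ≤ B * (K₁ * (2 * δ)) := by
            apply mul_le_mul_of_nonneg_left _ hBpos.le
            exact mul_le_mul hKle hw (norm_nonneg _) hK₁pos.le
        _ = 2 * (K₁ * B * δ) := by ring
        _ = 1/2 := by rw [hδeq]; ring
    have h5 : B * ((K:ℝ) * ‖w - ustar‖) * ‖w - ustar‖ ≤ (1/2) * ‖w - ustar‖ :=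
      mul_le_mul_of_nonneg_right h4 (norm_nonneg _)
    linarith
  -- the neighborhood
  refine ⟨{w | ‖w - ustar‖ < δ ∧ ‖ψ w‖ < ε}, ?_, η', hη'ge, hη'lt, ?_⟩
  · have hopen : IsOpen {w : EuclideanSpace ℝ (Fin n) | ‖w - ustar‖ < δ ∧ ‖ψ w‖ < ε} := by
      apply IsOpen.inter
      · exact isOpen_lt ((continuous_id.sub continuous_const).norm) continuous_const
      · exact isOpen_lt ((continuous_id.sub hφ.continuous).norm) continuous_const
    refine hopen.mem_nhds ⟨by simpa using hδpos, ?_⟩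
    show ‖ψ ustar‖ < ε
    rw [show ψ ustar = 0 from hroot]
    simpa using hεpos
  intro u hu0 hstep
  -- rewrite the step hypothesis
  have hstep' : ∀ k, ‖F (u k) (u (k+1) - u k) + ψ (u k)‖ ≤ η * ‖ψ (u k)‖ := by
    intro k
    have := hstep k
    rwa [hfd (u k)] at this
  -- main inductive step
  have main : ∀ k, (‖u k - ustar‖ < δ ∧ ‖ψ (u k)‖ < ε) →
      ((‖u (k+1) - ustar‖ < δ ∧ ‖ψ (u (k+1))‖ < ε) ∧
        ‖ψ (u (k+1))‖ ≤ η' * ‖ψ (u k)‖) := by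
    intro k ⟨hx1, hx2⟩
    set x := u k
    set y := u (k+1)
    set s := y - x with hsdef
    have hr := hstep' k
    -- step bound
    have hFs : ‖F x s‖ ≤ 2 * ‖ψ x‖ := by
      have h1 : ‖F x s‖ ≤ ‖F x s + ψ x‖ + ‖ψ x‖ := by
        have := norm_add_le (F x s + ψ x) (-ψ x)
        simpa using this
      have h2 : ‖F x s‖ ≤ η * ‖ψ x‖ + ‖ψ x‖ := by linarith
      have h3 : η * ‖ψ x‖ ≤ 1 * ‖ψ x‖ := mul_le_mul_of_nonneg_right hη1.le (norm_nonneg _)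
      linarith
    have hs4 : ‖s‖ ≤ 4 * B * ‖ψ x‖ := by
      calc ‖s‖ ≤ 2 * B * ‖F x s‖ := hFlow x hx1.le s
        _ ≤ 2 * B * (2 * ‖ψ x‖) := mul_le_mul_of_nonneg_left hFs (by positivity)
        _ = 4 * B * ‖ψ x‖ := by ring
    have hsε : ‖s‖ ≤ 4 * B * ε := hs4.trans
      (mul_le_mul_of_nonneg_left hx2.le (by positivity))
    -- residual contraction
    have hres : ‖ψ y‖ ≤ η' * ‖ψ x‖ := by
      have ht := taylor x y
      have hyx : y - x = s := rfl
      rw [hyx] at ht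
      have hdecomp : ψ y = (ψ y - ψ x - F x s) + (F x s + ψ x) := by abel
      have h1 : ‖ψ y‖ ≤ (K:ℝ) * ‖s‖ * ‖s‖ + η * ‖ψ x‖ := by
        calc ‖ψ y‖ ≤ ‖ψ y - ψ x - F x s‖ + ‖F x s + ψ x‖ := by
              calc ‖ψ y‖ = ‖(ψ y - ψ x - F x s) + (F x s + ψ x)‖ := by rw [← hdecomp]
                _ ≤ _ := norm_add_le _ _
          _ ≤ (K:ℝ) * ‖s‖ * ‖s‖ + η * ‖ψ x‖ := by linarith
      have h2 : (K:ℝ) * ‖s‖ * ‖s‖ ≤ K₁ * (4 * B * ε) * (4 * B * ‖ψ x‖) := by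
        have hsnn : (0:ℝ) ≤ ‖s‖ := norm_nonneg _
        have := mul_le_mul hsε hs4 hsnn (by positivity : (0:ℝ) ≤ 4 * B * ε)
        nlinarith [K.coe_nonneg]
      have h3 : K₁ * (4 * B * ε) * (4 * B * ‖ψ x‖) = (16 * K₁ * B ^ 2 * ε) * ‖ψ x‖ := by ring
      have h4 : (16 * K₁ * B ^ 2 * ε) * ‖ψ x‖ ≤ ρ * ‖ψ x‖ :=
        mul_le_mul_of_nonneg_right hε1 (norm_nonneg _)
      calc ‖ψ y‖ ≤ (K:ℝ) * ‖s‖ * ‖s‖ + η * ‖ψ x‖ := h1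
        _ ≤ ρ * ‖ψ x‖ + η * ‖ψ x‖ := by rw [h3] at h2; linarith
        _ = η' * ‖ψ x‖ := by rw [hη'def]; ring
    have hψy : ‖ψ y‖ < ε := by
      calc ‖ψ y‖ ≤ η' * ‖ψ x‖ := hres
        _ < η' * ε := by exact mul_lt_mul_of_pos_left hx2 hη'pos
        _ ≤ 1 * ε := mul_le_mul_of_nonneg_right hη'lt.le hεpos.le
        _ = ε := one_mul ε
    have hy2δ : ‖y - ustar‖ ≤ 2 * δ := by
      have : ‖y - ustar‖ ≤ ‖x - ustar‖ + ‖s‖ := by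
        have := norm_add_le (x - ustar) s
        have he : y - ustar = (x - ustar) + s := by rw [hsdef]; abel
        rw [he]; exact this
      have h4 : 4 * B * ε ≤ δ := hε2
      linarith
    have hyδ : ‖y - ustar‖ < δ := by
      have h1 := hdist y hy2δ
      have h2 : 2 * B * ‖ψ y‖ < 2 * B * ε := by
        apply mul_lt_mul_of_pos_left hψy (by positivity)
      have h3 : 2 * B * ε ≤ δ / 2 := by linarith [hε2]
      linarith [hδpos]
    exact ⟨⟨hyδ, hψy⟩, hres⟩
  have hmem : ∀ k, ‖u k - ustar‖ < δ ∧ ‖ψ (u k)‖ < ε := by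
    intro k
    induction k with
    | zero => exact hu0
    | succ k ih => exact (main k ih).1
  have hres : ∀ k, ‖ψ (u (k+1))‖ ≤ η' * ‖ψ (u k)‖ := fun k => (main k (hmem k)).2
  have hgeo : ∀ k, ‖ψ (u k)‖ ≤ η' ^ k * ‖ψ (u 0)‖ := by
    intro k
    induction k with
    | zero => simp
    | succ k ih =>
      calc ‖ψ (u (k+1))‖ ≤ η' * ‖ψ (u k)‖ := hres k
        _ ≤ η' * (η' ^ k * ‖ψ (u 0)‖) := mul_le_mul_of_nonneg_left ih hη'pos.le
        _ = η' ^ (k+1) * ‖ψ (u 0)‖ := by ring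
  have hgeo0 : Tendsto (fun k => η' ^ k * ‖ψ (u 0)‖) atTop (nhds 0) := by
    have := tendsto_pow_atTop_nhds_zero_of_lt_one hη'pos.le hη'lt
    simpa using this.mul_const ‖ψ (u 0)‖
  have hψtend : Tendsto (fun k => ψ (u k)) atTop (nhds 0) := by
    rw [tendsto_zero_iff_norm_tendsto_zero]
    exact squeeze_zero (fun k => norm_nonneg _) hgeo hgeo0
  have hutend : Tendsto u atTop (nhds ustar) := by
    rw [tendsto_iff_norm_sub_tendsto_zero]
    apply squeeze_zero (fun k => norm_nonneg _)
      (g := fun k => 2 * B * ‖ψ (u k)‖)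
    · intro k
      exact hdist (u k) (by linarith [(hmem k).1, hδpos])
    · have : Tendsto (fun k => ‖ψ (u k)‖) atTop (nhds 0) :=
        squeeze_zero (fun k => norm_nonneg _) hgeo hgeo0
      simpa using (this.const_mul (2 * B))
  exact ⟨hmem, hres, hψtend, hutend⟩
end
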